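/- A k-uniform hypergraph G with at most 2^{(k-1)x - 1} hyperedges has a bicoloring cover of size x: if |E| ≤ 2^{(k-1)x-1}, then under x independent uniformly random bicolorings of V, the probability that every hyperedge is non-monochromatic in at least one bicoloring is at least 1/2; in particular such a cover exists. -/

import Mathlib

/-- A family of `t` bicolorings covers the hypergraph with edge set `E` if every
hyperedge is non-monochromatic under at least one bicoloring. -/
def Covers {α : Type*} (E : Finset (Finset α)) {t : ℕ} (X : Fin t → α → Bool) : Prop :=
  ∀ e ∈ E, ∃ i : Fin t, ∃ u ∈ e, ∃ v ∈ e, X i u ≠ X i v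

/-- The bicoloring cover number: minimum size of a bicoloring cover. -/
noncomputable def coverNum {α : Type*} (E : Finset (Finset α)) : ℕ :=
  sInf {t | ∃ X : Fin t → α → Bool, Covers E X}

open Finset in
lemma mono_count {α : Type*} [Fintype α] [DecidableEq α] (e : Finset α) (a : α) (ha : a ∈ e) :
    Fintype.card {f : α → Bool // ∀ u ∈ e, ∀ v ∈ e, f u = f v}
      ≤ 2 * 2 ^ (Fintype.card α - e.card) := by
  classical
  have hinj : Function.Injective
      (fun f : {f : α → Bool // ∀ u ∈ e, ∀ v ∈ e, f u = f v} =>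
        ((f.1 a, fun v : {v : α // v ∉ e} => f.1 v.1) : Bool × ({v : α // v ∉ e} → Bool))) := by
    rintro ⟨f, hf⟩ ⟨g, hg⟩ h
    simp only [Prod.mk.injEq] at h
    ext v
    by_cases hv : v ∈ e
    · show f v = g v
      rw [hf v hv a ha, hg v hv a ha]
      exact h.1
    · exact congrFun h.2 ⟨v, hv⟩
  calc Fintype.card {f : α → Bool // ∀ u ∈ e, ∀ v ∈ e, f u = f v}
      ≤ Fintype.card (Bool × ({v : α // v ∉ e} → Bool)) := Fintype.card_le_of_injective _ hinj
    _ = 2 * 2 ^ (Fintype.card α - e.card) := by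
        rw [Fintype.card_prod, Fintype.card_fun, Fintype.card_bool,
          Fintype.card_subtype_compl, Fintype.card_coe]

theorem sparse_hypergraph_cover_random {α : Type*} [Fintype α] [DecidableEq α]
    (E : Finset (Finset α)) (k x : ℕ) (hk : 2 ≤ k) (hx : 1 ≤ x)
    (huniform : ∀ e ∈ E, e.card = k)
    (hsize : E.card ≤ 2 ^ ((k - 1) * x - 1)) :
    Fintype.card (Fin x → α → Bool) ≤ 2 * Nat.card {X : Fin x → α → Bool // Covers E X} ∧
      ∃ X : Fin x → α → Bool, Covers E X := by
  classical
  set N := Fintype.card α with hN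
  have htotal : Fintype.card (Fin x → α → Bool) = 2 ^ (N * x) := by
    rw [Fintype.card_fun, Fintype.card_fun, Fintype.card_bool, Fintype.card_fin, ← pow_mul]
  have hgood : Nat.card {X : Fin x → α → Bool // Covers E X}
      = (Finset.univ.filter (fun X : Fin x → α → Bool => Covers E X)).card := by
    rw [Nat.card_eq_fintype_card, Fintype.card_subtype]
  rcases E.eq_empty_or_nonempty with hE | hE
  · subst hE
    have hcov : ∀ X : Fin x → α → Bool, Covers (∅ : Finset (Finset α)) X := by
      intro X e he; simp at he
    constructor
    · rw [hgood]
      have : (Finset.univ.filter (fun X : Fin x → α → Bool => Covers (∅ : Finset (Finset α)) X))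
          = Finset.univ := by
        apply Finset.filter_true_of_mem; intro X _; exact hcov X
      rw [this, Finset.card_univ]
      omega
    · exact ⟨fun _ _ => true, hcov _⟩
  · obtain ⟨e₀, he₀⟩ := hE
    have hkN : k ≤ N := by
      rw [← huniform e₀ he₀, hN, ← Finset.card_univ]
      exact Finset.card_le_card (Finset.subset_univ _)
    -- per-edge monochromatic count
    have hedge : ∀ e ∈ E,
        (Finset.univ.filter (fun X : Fin x → α → Bool =>
          ∀ i, ∀ u ∈ e, ∀ v ∈ e, X i u = X i v)).card ≤ 2 ^ ((N - k + 1) * x) := by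
      intro e he
      have hcard : e.card = k := huniform e he
      obtain ⟨a, ha⟩ := Finset.card_pos.mp (by omega : 0 < e.card)
      have h1 : (Finset.univ.filter (fun X : Fin x → α → Bool =>
          ∀ i, ∀ u ∈ e, ∀ v ∈ e, X i u = X i v)).card
          = Fintype.card {X : Fin x → α → Bool // ∀ i, ∀ u ∈ e, ∀ v ∈ e, X i u = X i v} :=
        (Fintype.card_subtype _).symm
      have h2 : Fintype.card {X : Fin x → α → Bool // ∀ i, ∀ u ∈ e, ∀ v ∈ e, X i u = X i v}
          = (Fintype.card {f : α → Bool // ∀ u ∈ e, ∀ v ∈ e, f u = f v}) ^ x := by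
        rw [Fintype.card_congr
          (Equiv.subtypePiEquivPi (p := fun _ : Fin x => fun f : α → Bool =>
            ∀ u ∈ e, ∀ v ∈ e, f u = f v)), Fintype.card_pi]
        simp
      rw [h1, h2]
      calc (Fintype.card {f : α → Bool // ∀ u ∈ e, ∀ v ∈ e, f u = f v}) ^ x
          ≤ (2 * 2 ^ (N - k)) ^ x := Nat.pow_le_pow_left (hcard ▸ mono_count e a ha) x
        _ = 2 ^ ((N - k + 1) * x) := by rw [← pow_succ', ← pow_mul]
    -- union bound for bad colorings
    have hbad : (Finset.univ.filter (fun X : Fin x → α → Bool => ¬ Covers E X)).card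
        ≤ 2 ^ (N * x - 1) := by
      have hsub : (Finset.univ.filter (fun X : Fin x → α → Bool => ¬ Covers E X))
          ⊆ E.biUnion (fun e => Finset.univ.filter (fun X : Fin x → α → Bool =>
            ∀ i, ∀ u ∈ e, ∀ v ∈ e, X i u = X i v)) := by
        intro X hX
        simp only [Finset.mem_filter, Finset.mem_univ, true_and, Covers] at hX
        push_neg at hX
        obtain ⟨e, he, hmono⟩ : ∃ e ∈ E, ∀ i, ∀ u ∈ e, ∀ v ∈ e, X i u = X i v := by simpa using hX
        refine Finset.mem_biUnion.mpr ⟨e, he, ?_⟩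
        simp only [Finset.mem_filter, Finset.mem_univ, true_and]
        exact hmono
      calc (Finset.univ.filter (fun X : Fin x → α → Bool => ¬ Covers E X)).card
          ≤ (E.biUnion (fun e => Finset.univ.filter (fun X : Fin x → α → Bool =>
              ∀ i, ∀ u ∈ e, ∀ v ∈ e, X i u = X i v))).card := Finset.card_le_card hsub
        _ ≤ ∑ e ∈ E, (Finset.univ.filter (fun X : Fin x → α → Bool =>
              ∀ i, ∀ u ∈ e, ∀ v ∈ e, X i u = X i v)).card := Finset.card_biUnion_le
        _ ≤ ∑ _e ∈ E, 2 ^ ((N - k + 1) * x) := Finset.sum_le_sum hedge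
        _ = E.card * 2 ^ ((N - k + 1) * x) := by rw [Finset.sum_const, smul_eq_mul]
        _ ≤ 2 ^ ((k - 1) * x - 1) * 2 ^ ((N - k + 1) * x) := Nat.mul_le_mul_right _ hsize
        _ = 2 ^ ((k - 1) * x - 1 + (N - k + 1) * x) := (pow_add 2 _ _).symm
        _ = 2 ^ (N * x - 1) := by
            congr 1
            have h1 : (k - 1) * x + (N - k + 1) * x = N * x := by
              rw [← add_mul]
              congr 1
              omega
            have h2 : 1 ≤ (k - 1) * x := Nat.one_le_iff_ne_zero.mpr
              (Nat.mul_ne_zero (by omega) (by omega))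
            omega
    have hpart : (Finset.univ.filter (fun X : Fin x → α → Bool => Covers E X)).card
        + (Finset.univ.filter (fun X : Fin x → α → Bool => ¬ Covers E X)).card
        = 2 ^ (N * x) := by
      rw [Finset.card_filter_add_card_filter_not, Finset.card_univ, htotal]
    have hNx : 1 ≤ N * x := Nat.one_le_iff_ne_zero.mpr
      (Nat.mul_ne_zero (by omega) (by omega))
    have hhalf : 2 ^ (N * x - 1) + 2 ^ (N * x - 1) = 2 ^ (N * x) := by
      rw [← two_mul, ← pow_succ']
      congr 1
      omega
    have hgoodge : 2 ^ (N * x - 1)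
        ≤ (Finset.univ.filter (fun X : Fin x → α → Bool => Covers E X)).card := by omega
    constructor
    · rw [htotal, hgood]; omega
    · have : 0 < (Finset.univ.filter (fun X : Fin x → α → Bool => Covers E X)).card := by
        have := Nat.one_le_two_pow (n := N * x - 1)
        omega
      obtain ⟨X, hX⟩ := Finset.card_pos.mp this
      exact ⟨X, (Finset.mem_filter.mp hX).2⟩
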